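/- Let Q = (1−α)·P₁ + α·P₂ with α ∈ (0,1), and assume log(dQ/dP₁) is integrable with respect to P₁ and P₂ and that KL(Q‖P₁) and KL(P₁‖Q) are finite. Then the P₂-expectation of the log density ratio of the mixture against P₁ decomposes as a positively weighted sum of two KL divergences: ∫ log((dQ/dP₁)(x)) dP₂(x) = (1/α)·KL(Q‖P₁) + ((1−α)/α)·KL(P₁‖Q). -/

import Mathlib

open MeasureTheory ProbabilityTheory

/-- Kullback–Leibler divergence `KL(μ‖ν) = ∫ log (dμ/dν) dμ`. -/
noncomputable def KL {Ω : Type*} [MeasurableSpace Ω] (μ ν : Measure Ω) : ℝ :=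
  ∫ x, Real.log ((μ.rnDeriv ν x).toReal) ∂μ

/-- The mixture distribution `P(λ) = λ·P₁ + (1-λ)·P₂`. -/
noncomputable def mix {Ω : Type*} [MeasurableSpace Ω] (P₁ P₂ : Measure Ω) (l : ℝ) :
    Measure Ω :=
  (ENNReal.ofReal l) • P₁ + (ENNReal.ofReal (1 - l)) • P₂

/-- With `Q = (1-α)·P₁ + α·P₂` and `α ∈ (0,1)`, the `P₂`-expectation of the log density
ratio of the mixture against `P₁` decomposes as a positively weighted sum of two KL
divergences: `∫ log(dQ/dP₁) dP₂ = (1/α)·KL(Q‖P₁) + ((1-α)/α)·KL(P₁‖Q)`. -/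
theorem stmt13 {Ω : Type*} [MeasurableSpace Ω] (P₁ P₂ : Measure Ω)
    [IsProbabilityMeasure P₁] [IsProbabilityMeasure P₂]
    (hac₁ : P₁ ≪ P₂) (hac₂ : P₂ ≪ P₁)
    (α : ℝ) (hα : α ∈ Set.Ioo (0 : ℝ) 1)
    (Q : Measure Ω) (hQ : Q = mix P₁ P₂ (1 - α))
    (hInt₁ : Integrable (fun x => Real.log ((Q.rnDeriv P₁ x).toReal)) P₁)
    (hInt₂ : Integrable (fun x => Real.log ((Q.rnDeriv P₁ x).toReal)) P₂)
    (hKL₁ : Integrable (fun x => Real.log ((Q.rnDeriv P₁ x).toReal)) Q)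
    (hKL₂ : Integrable (fun x => Real.log ((P₁.rnDeriv Q x).toReal)) P₁) :
    (∫ x, Real.log ((Q.rnDeriv P₁ x).toReal) ∂P₂)
      = (1 / α) * KL Q P₁ + ((1 - α) / α) * KL P₁ Q := by
  obtain ⟨hα0, hα1⟩ := hα
  have h1α : (0:ℝ) ≤ 1 - α := by linarith
  have hQ' : Q = (ENNReal.ofReal (1 - α)) • P₁ + (ENNReal.ofReal α) • P₂ := by
    rw [hQ, mix]; ring_nf
  haveI : IsProbabilityMeasure Q := by
    constructor
    rw [hQ']
    simp [← ENNReal.ofReal_add h1α hα0.le]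
  -- Q ≪ P₁
  have hQP₁ : Q ≪ P₁ := by
    rw [hQ']
    intro s hs
    simp [hs, hac₂ hs]
  have hP₁Q : P₁ ≪ Q := by
    intro s hs
    rw [hQ'] at hs
    simp only [Measure.add_apply, Measure.smul_apply, smul_eq_mul, add_eq_zero,
      mul_eq_zero] at hs
    rcases hs.1 with h | h
    · exact absurd h (by simp [ENNReal.ofReal_eq_zero]; linarith)
    · exact h
  set f : Ω → ℝ := fun x => Real.log ((Q.rnDeriv P₁ x).toReal) with hf
  set A := ∫ x, f x ∂P₁ with hA
  set B := ∫ x, f x ∂P₂ with hB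
  -- KL Q P₁ = (1-α) A + α B
  have hKLQ : KL Q P₁ = (1 - α) * A + α * B := by
    rw [KL]
    have : ∫ x, f x ∂Q = ∫ x, f x ∂((ENNReal.ofReal (1 - α)) • P₁ + (ENNReal.ofReal α) • P₂) := by
      rw [← hQ']
    rw [this, integral_add_measure (hInt₁.smul_measure ENNReal.ofReal_ne_top)
      (hInt₂.smul_measure ENNReal.ofReal_ne_top), integral_smul_measure, integral_smul_measure,
      ENNReal.toReal_ofReal h1α, ENNReal.toReal_ofReal hα0.le]
    simp [A, B]
  -- KL P₁ Q = -A
  have hKLP : KL P₁ Q = -A := by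
    rw [KL, hA, ← integral_neg]
    refine integral_congr_ae ?_
    filter_upwards [Measure.inv_rnDeriv hP₁Q] with x hx
    have hx' : (Q.rnDeriv P₁) x = ((P₁.rnDeriv Q) x)⁻¹ := by
      rw [← hx]; simp
    simp [f, hx', ENNReal.toReal_inv, Real.log_inv]
  rw [hKLQ, hKLP]
  field_simp
  ring
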